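/- Let H = [[0,I₂],[I₂,0]] (4×4) and for x ∈ ℂ let N(x) be the block diagonal matrix diag([[λ₁,1],[0,λ₁]], [[λ₂,0],[x,λ₂]]) with λ₁ ≠ λ₂. Then each N(x) is H-normal, and if T is an invertible matrix with N(x)T = T N(x̃) and T T^[*] = I (where T^[*] = H⁻¹T*H), then x̃ = x. -/
import Mathlib


open Matrix

set_option maxHeartbeats 1000000

/-- With `H = [[0,I₂],[I₂,0]]` and `N(x) = diag([[λ₁,1],[0,λ₁]], [[λ₂,0],[x,λ₂]])`,
each `N(x)` is H-normal, and `x` is an H-unitary invariant. -/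
theorem stmt9 (lam1 lam2 : ℂ) (hne : lam1 ≠ lam2)
    (H : Matrix (Fin 2 ⊕ Fin 2) (Fin 2 ⊕ Fin 2) ℂ)
    (hHdef : H = Matrix.fromBlocks 0 1 1 0)
    (Nmat : ℂ → Matrix (Fin 2 ⊕ Fin 2) (Fin 2 ⊕ Fin 2) ℂ)
    (hNdef : ∀ x : ℂ, Nmat x =
      Matrix.fromBlocks !![lam1, 1; 0, lam1] 0 0 !![lam2, 0; x, lam2]) :
    (∀ x : ℂ, Nmat x * (H⁻¹ * (Nmat x)ᴴ * H) = (H⁻¹ * (Nmat x)ᴴ * H) * Nmat x) ∧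
    (∀ (x xt : ℂ) (T : Matrix (Fin 2 ⊕ Fin 2) (Fin 2 ⊕ Fin 2) ℂ),
      IsUnit T.det → Nmat x * T = T * Nmat xt →
      T * (H⁻¹ * Tᴴ * H) = 1 → xt = x) := by
  have hsub : lam1 - lam2 ≠ 0 := sub_ne_zero.mpr hne
  have hHinv : H⁻¹ = H := by
    rw [hHdef]
    apply inv_eq_right_inv
    simp [Matrix.fromBlocks_multiply, ← Matrix.fromBlocks_one]
  constructor
  · intro x
    rw [hHinv, hHdef, hNdef]
    ext i j
    rcases i with i | i <;> rcases j with j | j <;> fin_cases i <;> fin_cases j <;>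
      simp [Matrix.mul_apply, Fintype.sum_sum_type, Fin.sum_univ_two,
        Matrix.conjTranspose_apply] <;> ring
  · intro x xt T _ hcomm hunit
    rw [hHinv, hHdef] at hunit
    rw [hNdef, hNdef] at hcomm
    have e := fun i j => congrFun (congrFun hcomm i) j
    have u := fun i j => congrFun (congrFun hunit i) j
    have e24 := e (Sum.inl 1) (Sum.inr 1)
    have e23 := e (Sum.inl 1) (Sum.inr 0)
    have e14 := e (Sum.inl 0) (Sum.inr 1)
    have e13 := e (Sum.inl 0) (Sum.inr 0)
    have e11 := e (Sum.inl 0) (Sum.inl 0)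
    have e12 := e (Sum.inl 0) (Sum.inl 1)
    have e43 := e (Sum.inr 1) (Sum.inr 0)
    have u22 := u (Sum.inl 1) (Sum.inl 1)
    have u34 := u (Sum.inr 0) (Sum.inr 1)
    have u33 := u (Sum.inr 0) (Sum.inr 0)
    simp [Matrix.mul_apply, Fintype.sum_sum_type, Fin.sum_univ_two,
      Matrix.conjTranspose_apply] at e24 e23 e14 e13 e11 e12 e43
    simp [Matrix.mul_apply, Fintype.sum_sum_type, Fin.sum_univ_two,
      Matrix.one_apply, Matrix.conjTranspose_apply] at u22 u34 u33
    -- abbreviations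
    set t11 := T (Sum.inl 0) (Sum.inl 0)
    set t12 := T (Sum.inl 0) (Sum.inl 1)
    set t13 := T (Sum.inl 0) (Sum.inr 0)
    set t14 := T (Sum.inl 0) (Sum.inr 1)
    set t21 := T (Sum.inl 1) (Sum.inl 0)
    set t22 := T (Sum.inl 1) (Sum.inl 1)
    set t23 := T (Sum.inl 1) (Sum.inr 0)
    set t24 := T (Sum.inl 1) (Sum.inr 1)
    set t31 := T (Sum.inr 0) (Sum.inl 0)
    set t32 := T (Sum.inr 0) (Sum.inl 1)
    set t33 := T (Sum.inr 0) (Sum.inr 0)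
    set t34 := T (Sum.inr 0) (Sum.inr 1)
    set t43 := T (Sum.inr 1) (Sum.inr 0)
    set t44 := T (Sum.inr 1) (Sum.inr 1)
    have h24 : t24 = 0 := by
      have : (lam1 - lam2) * t24 = 0 := by linear_combination e24
      exact (mul_eq_zero.mp this).resolve_left hsub
    have h23 : t23 = 0 := by
      have : (lam1 - lam2) * t23 = 0 := by linear_combination e23 + xt * h24
      exact (mul_eq_zero.mp this).resolve_left hsub
    have h14 : t14 = 0 := by
      have : (lam1 - lam2) * t14 = 0 := by linear_combination e14 - h24
      exact (mul_eq_zero.mp this).resolve_left hsub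
    have h13 : t13 = 0 := by
      have : (lam1 - lam2) * t13 = 0 := by linear_combination e13 - h23 + xt * h14
      exact (mul_eq_zero.mp this).resolve_left hsub
    have h21 : t21 = 0 := by linear_combination e11
    have h2211 : t22 = t11 := by linear_combination e12
    have hu22 : t11 * (starRingEnd ℂ) t44 = 1 := by
      rw [h21, h23, h24, h2211] at u22
      linear_combination u22
    have ht11 : (starRingEnd ℂ) t11 ≠ 0 := by
      intro h
      have h0 : t11 = 0 := by simpa using congrArg (starRingEnd ℂ) h
      rw [h0, zero_mul] at hu22
      exact one_ne_zero hu22.symm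
    have hT11 : t11 ≠ 0 := left_ne_zero_of_mul_eq_one hu22
    have h34 : t34 = 0 := by
      simp [h21, h23, h24, h2211] at u34
      exact u34.resolve_right hT11
    have hu33 : t33 * (starRingEnd ℂ) t11 = 1 := by
      simp [h13, h14, h34] at u33
      linear_combination u33
    have hc : t44 * (starRingEnd ℂ) t11 = 1 := by
      have := congrArg (starRingEnd ℂ) hu22
      simpa [mul_comm] using this
    have h3344 : t33 = t44 := by
      have := hu33.trans hc.symm
      exact mul_right_cancel₀ ht11 this
    have ht33 : t33 ≠ 0 := left_ne_zero_of_mul_eq_one hu33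
    have hx : x * t33 = xt * t33 := by
      linear_combination e43 - xt * h3344
    exact (mul_right_cancel₀ ht33 hx.symm)
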